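/- For every integer n ≥ 0, the following identity holds in ℚ: S₁(n) = (−1)^n · 2^{2n+1} · 3^{2n+1} · (n+1)_{n+1} · (n+2)_n · Σ_{k=0}^{n} [ (−n)_k · (2n+2)_k / ( (n+2)_k · k! ) ] · (1/9)^k. -/

import Mathlib

open Finset

/-- The rising factorial `(a)_k = a(a+1)⋯(a+k-1)`, with `(a)_0 = 1`. -/
def risingFactorial (a : ℚ) (k : ℕ) : ℚ := ∏ i ∈ range k, (a + i)

/-- `S₁(n) = Σ_{k=0}^{2n+1} C(2n+1,k)·(∏_{j=1}^{2n+1}(6n-2k+4-2j))·(-1)^k·3^(2k+1)`. -/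
def S₁ (n : ℕ) : ℤ :=
  ∑ k ∈ range (2 * n + 2), ((2 * n + 1).choose k : ℤ) *
    (∏ j ∈ Icc 1 (2 * n + 1), (6 * (n : ℤ) - 2 * (k : ℤ) + 4 - 2 * (j : ℤ))) *
    (-1) ^ k * 3 ^ (2 * k + 1)

lemma rF_succ (a : ℚ) (k : ℕ) : risingFactorial a (k+1) = risingFactorial a k * (a + k) :=
  prod_range_succ _ _

lemma rF_zero (a : ℚ) : risingFactorial a 0 = 1 := prod_range_zero _

lemma rF_nat (m : ℕ) : ∀ k : ℕ, risingFactorial ((m:ℚ)+1) k * (m.factorial : ℚ)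
    = ((m+k).factorial : ℚ) := by
  intro k
  induction k with
  | zero => simp [rF_zero]
  | succ k ih =>
      rw [rF_succ, mul_right_comm, ih]
      push_cast [show m + (k+1) = (m+k) + 1 from by ring, Nat.factorial_succ]
      ring

lemma rF_nat_div (m k : ℕ) : risingFactorial ((m:ℚ)+1) k
    = ((m+k).factorial : ℚ) / (m.factorial : ℚ) := by
  rw [eq_div_iff (by exact_mod_cast m.factorial_ne_zero), rF_nat]

lemma rF_neg : ∀ (k m : ℕ), risingFactorial (-((k:ℚ)+m)) k * (m.factorial : ℚ)
    = (-1)^k * ((k+m).factorial : ℚ) := by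
  intro k
  induction k with
  | zero => intro m; simp [rF_zero]
  | succ k ih =>
      intro m
      rw [rF_succ]
      have h1 : -((↑(k+1):ℚ)+m) + k = -((m:ℚ)+1) := by push_cast; ring
      have h2 : risingFactorial (-((↑(k+1):ℚ)+↑m)) k = risingFactorial (-((k:ℚ)+↑(m+1))) k := by
        congr 1; push_cast; ring
      rw [h1, h2]
      have h4 := ih (m+1)
      have h3 : ((m+1).factorial : ℚ) = ((m:ℚ)+1) * (m.factorial :ℚ) := by
        push_cast [Nat.factorial_succ]; ring
      rw [h3] at h4
      have h5 : ((k + (m+1)).factorial : ℚ) = ((k+1+m).factorial : ℚ) := by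
        rw [show k + (m+1) = k+1+m from by ring]
      rw [h5] at h4
      calc risingFactorial (-(↑k + ↑(m + 1))) k * -(↑m + 1) * ↑m.factorial
          = -(risingFactorial (-(↑k + ↑(m+1))) k * ((↑m + 1) * ↑m.factorial)) := by ring
        _ = -((-1)^k * ((k+1+m).factorial : ℚ)) := by rw [h4]
        _ = (-1)^(k+1) * ((k+1+m).factorial : ℚ) := by ring

lemma rF_neg_div (k m : ℕ) : risingFactorial (-((k:ℚ)+m)) k
    = (-1)^k * ((k+m).factorial : ℚ) / (m.factorial : ℚ) := by
  rw [eq_div_iff (by exact_mod_cast m.factorial_ne_zero), rF_neg]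

lemma prodIcc (N k : ℕ) : (∏ j ∈ Icc 1 N, ((k:ℚ)+1+N-j)) = risingFactorial ((k:ℚ)+1) N := by
  rw [show Icc 1 N = Ico 1 (N+1) from rfl, Finset.prod_Ico_eq_prod_range,
    risingFactorial, ← Finset.prod_range_reflect (fun i => ((k:ℚ)+1+i)) N]
  simp only [Nat.add_sub_cancel]
  apply prod_congr rfl
  intro i hi
  have hi' : i < N := mem_range.mp hi
  have hc : ((N-1-i : ℕ) : ℚ) = (N:ℚ)-1-(i:ℚ) := by
    rw [Nat.sub_sub, Nat.cast_sub (by omega)]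
    push_cast; ring
  rw [hc]; push_cast; ring

theorem stmt_8 (n : ℕ) :
    (S₁ n : ℚ) = (-1) ^ n * 2 ^ (2 * n + 1) * 3 ^ (2 * n + 1)
      * risingFactorial ((n : ℚ) + 1) (n + 1) * risingFactorial ((n : ℚ) + 2) n
      * ∑ k ∈ range (n + 1),
          risingFactorial (-(n : ℚ)) k * risingFactorial (2 * (n : ℚ) + 2) k
            / (risingFactorial ((n : ℚ) + 2) k * (Nat.factorial k : ℚ))
            * (1 / 9 : ℚ) ^ k := by
  simp only [S₁]
  push_cast
  rw [← Finset.sum_subset (Finset.range_subset_range.mpr (by omega : n + 1 ≤ 2 * n + 2))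
    (by
      intro x hx hx'
      rw [mem_range] at hx hx'
      have hj : (3*n+2-x) ∈ Icc 1 (2*n+1) := by rw [mem_Icc]; omega
      have hval : (6 * (n:ℚ) - 2 * (x:ℚ) + 4 - 2 * ((3*n+2-x : ℕ):ℚ)) = 0 := by
        rw [Nat.cast_sub (by omega)]; push_cast; ring
      rw [Finset.prod_eq_zero hj hval]
      ring)]
  rw [← Finset.sum_range_reflect, Finset.mul_sum]
  refine Finset.sum_congr rfl ?_
  intro k hk
  rw [mem_range] at hk
  obtain ⟨m, rfl⟩ : ∃ m, n = k + m := ⟨n - k, by omega⟩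
  have e1 : k + m + 1 - 1 - k = m := by omega
  rw [e1]
  -- the product
  have hP : (∏ x ∈ Finset.Icc 1 (2 * (k + m) + 1),
        (6 * ((k + m : ℕ):ℚ) - 2 * (m:ℚ) + 4 - 2 * (x:ℚ)))
      = 2^(2*(k+m)+1) * (((3*k+2*m+1).factorial : ℚ) / (k.factorial : ℚ)) := by
    calc (∏ x ∈ Finset.Icc 1 (2 * (k + m) + 1),
          (6 * ((k + m : ℕ):ℚ) - 2 * (m:ℚ) + 4 - 2 * (x:ℚ)))
        = ∏ x ∈ Finset.Icc 1 (2 * (k + m) + 1),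
            ((2:ℚ) * ((k:ℚ) + 1 + ((2*(k+m)+1 : ℕ):ℚ) - x)) := by
          apply prod_congr rfl; intro j hj; push_cast; ring
      _ = (∏ _x ∈ Finset.Icc 1 (2 * (k + m) + 1), (2:ℚ))
            * ∏ x ∈ Finset.Icc 1 (2 * (k + m) + 1), ((k:ℚ) + 1 + ((2*(k+m)+1 : ℕ):ℚ) - x) := by
          rw [Finset.prod_mul_distrib]
      _ = 2^(2*(k+m)+1) * risingFactorial ((k:ℚ)+1) (2*(k+m)+1) := by
          rw [prodIcc, Finset.prod_const, Nat.card_Icc, Nat.add_sub_cancel]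
      _ = 2^(2*(k+m)+1) * (((3*k+2*m+1).factorial : ℚ) / (k.factorial : ℚ)) := by
          rw [rF_nat_div, show k + (2*(k+m)+1) = 3*k+2*m+1 from by omega]
  rw [hP]
  -- choose
  have hC : (((2 * (k + m) + 1).choose m : ℕ) : ℚ)
      = ((2*(k+m)+1).factorial : ℚ) / ((m.factorial : ℚ) * ((2*k+m+1).factorial : ℚ)) := by
    rw [Nat.cast_choose ℚ (by omega : m ≤ 2*(k+m)+1),
      show 2*(k+m)+1-m = 2*k+m+1 from by omega]
  rw [hC]
  -- the rising factorials
  have hR1 : risingFactorial ((↑(k+m):ℚ) + 1) (k+m+1)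
      = ((2*(k+m)+1).factorial : ℚ) / ((k+m).factorial : ℚ) := by
    rw [rF_nat_div, show k+m + (k+m+1) = 2*(k+m)+1 from by omega]
  have hR2 : risingFactorial ((↑(k+m):ℚ) + 2) (k+m)
      = ((2*(k+m)+1).factorial : ℚ) / ((k+m+1).factorial : ℚ) := by
    rw [show ((↑(k+m):ℚ) + 2) = (↑(k+m+1):ℚ) + 1 from by push_cast; ring, rF_nat_div,
      show k+m+1 + (k+m) = 2*(k+m)+1 from by omega]
  have hR3 : risingFactorial (-(↑(k+m):ℚ)) k
      = (-1)^k * ((k+m).factorial : ℚ) / (m.factorial : ℚ) := by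
    rw [show (-(↑(k+m):ℚ)) = -((k:ℚ) + (m:ℚ)) from by push_cast; ring, rF_neg_div]
  have hR4 : risingFactorial (2 * (↑(k+m):ℚ) + 2) k
      = ((3*k+2*m+1).factorial : ℚ) / ((2*(k+m)+1).factorial : ℚ) := by
    rw [show (2 * (↑(k+m):ℚ) + 2) = (↑(2*(k+m)+1):ℚ) + 1 from by push_cast; ring, rF_nat_div,
      show 2*(k+m)+1 + k = 3*k+2*m+1 from by omega]
  have hR5 : risingFactorial ((↑(k+m):ℚ) + 2) k
      = ((2*k+m+1).factorial : ℚ) / ((k+m+1).factorial : ℚ) := by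
    rw [show ((↑(k+m):ℚ) + 2) = (↑(k+m+1):ℚ) + 1 from by push_cast; ring, rF_nat_div,
      show k+m+1 + k = 2*k+m+1 from by omega]
  rw [hR1, hR2, hR3, hR4, hR5]
  have f1 : ((k+m).factorial : ℚ) ≠ 0 := by exact_mod_cast (k+m).factorial_ne_zero
  have f2 : ((k+m+1).factorial : ℚ) ≠ 0 := by exact_mod_cast (k+m+1).factorial_ne_zero
  have f3 : ((2*(k+m)+1).factorial : ℚ) ≠ 0 := by exact_mod_cast (2*(k+m)+1).factorial_ne_zero
  have f4 : (m.factorial : ℚ) ≠ 0 := by exact_mod_cast m.factorial_ne_zero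
  have f5 : (k.factorial : ℚ) ≠ 0 := by exact_mod_cast k.factorial_ne_zero
  have f6 : ((2*k+m+1).factorial : ℚ) ≠ 0 := by exact_mod_cast (2*k+m+1).factorial_ne_zero
  have f7 : ((3*k+2*m+1).factorial : ℚ) ≠ 0 := by exact_mod_cast (3*k+2*m+1).factorial_ne_zero
  field_simp
  rcases Nat.even_or_odd k with hk2 | hk2 <;> rcases Nat.even_or_odd m with hm2 | hm2
  · rw [hk2.neg_one_pow, hm2.neg_one_pow, (hk2.add hm2).neg_one_pow,
      show (9:ℚ) = 3^2 from by norm_num, one_div_pow, ← pow_mul]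
    rw [show 2*(k+m)+1 = (2*m+1) + 2*k from by ring, pow_add]
    field_simp
    ring
  · rw [hk2.neg_one_pow, hm2.neg_one_pow, (hk2.add_odd hm2).neg_one_pow,
      show (9:ℚ) = 3^2 from by norm_num, one_div_pow, ← pow_mul]
    rw [show 2*(k+m)+1 = (2*m+1) + 2*k from by ring, pow_add]
    field_simp
    ring
  · rw [hk2.neg_one_pow, hm2.neg_one_pow, (hk2.add_even hm2).neg_one_pow,
      show (9:ℚ) = 3^2 from by norm_num, one_div_pow, ← pow_mul]
    rw [show 2*(k+m)+1 = (2*m+1) + 2*k from by ring, pow_add]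
    field_simp
    ring
  · rw [hk2.neg_one_pow, hm2.neg_one_pow, (hk2.add_odd hm2).neg_one_pow,
      show (9:ℚ) = 3^2 from by norm_num, one_div_pow, ← pow_mul]
    rw [show 2*(k+m)+1 = (2*m+1) + 2*k from by ring, pow_add]
    field_simp
    ring
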